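/- Frontier property (justifying the hypothesis of the BMSSP subproblem): let d̂ be an estimate function and b, B ∈ ℝ≥0∞ with 0 < b ≤ B. Assume (i) every vertex u with d(u) < b is complete, and (ii) for all vertices u, v with d(u) < b, we have d̂(v) ≤ d(u) + w(u,v) (all edges out of vertices at distance less than b have been relaxed). Then for every vertex v with d̂(v) ≠ d(v) and d(v) < B, there exists a complete vertex u with b ≤ d̂(u) < B such that the shortest path to v visits u. -/

import Mathlib

open scoped ENNReal

namespace SSSP

variable {V : Type*}

/-- The weight of a walk (a list of vertices): the sum of `w` over consecutive pairs.
A one-vertex walk has weight 0. -/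
noncomputable def walkWeight (w : V → V → ℝ≥0∞) : List V → ℝ≥0∞
  | [] => 0
  | [_] => 0
  | a :: b :: p => w a b + walkWeight w (b :: p)

/-- `p` is a walk from `u` to `v`: a nonempty list beginning at `u` and ending at `v`. -/
def IsWalk (u v : V) (p : List V) : Prop :=
  p ≠ [] ∧ p.head? = some u ∧ p.getLast? = some v

/-- The distance from `u` to `v`: the infimum of the weights of all walks from `u` to `v`. -/
noncomputable def dist (w : V → V → ℝ≥0∞) (u v : V) : ℝ≥0∞ :=
  ⨅ p : {p : List V // IsWalk u v p}, walkWeight w p.1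

/-- The shortest path (from `s`) to `v` visits `u`. -/
def Visits (w : V → V → ℝ≥0∞) (s u v : V) : Prop :=
  dist w s u + dist w u v = dist w s v

/-- The uniqueness assumption: any two distinct walks starting from `s` with finite
weight have different weights. -/
def UniqueWeights (w : V → V → ℝ≥0∞) (s : V) : Prop :=
  ∀ p q : List V, p ≠ [] → q ≠ [] → p.head? = some s → q.head? = some s →
    walkWeight w p ≠ ⊤ → walkWeight w q ≠ ⊤ → walkWeight w p = walkWeight w q → p = q

/-- The relaxation operator. -/
noncomputable def relax (w : V → V → ℝ≥0∞) (f : V → ℝ≥0∞) : V → ℝ≥0∞ :=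
  fun v => min (f v) (⨅ u, f u + w u v)

end SSSP

namespace SSSP

variable {V : Type*}

private lemma walkWeight_append (w : V → V → ℝ≥0∞) :
    ∀ (p : List V) (x : V) (q : List V),
      walkWeight w (p ++ x :: q) = walkWeight w (p ++ [x]) + walkWeight w (x :: q)
  | [], x, q => by simp [walkWeight]
  | [a], x, q => by simp [walkWeight]
  | a :: b :: p, x, q => by
      have IH := walkWeight_append w (b :: p) x q
      show w a b + walkWeight w ((b :: p) ++ x :: q)
          = (w a b + walkWeight w ((b :: p) ++ [x])) + walkWeight w (x :: q)
      rw [IH, add_assoc]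

private lemma head?_append_cons (l1 : List V) (a : V) (l2 l3 : List V) :
    (l1 ++ a :: l2).head? = (l1 ++ a :: l3).head? := by
  cases l1 <;> simp

private lemma getLast?_append_cons (l1 : List V) (a : V) (l2 : List V) :
    (l1 ++ a :: l2).getLast? = (a :: l2).getLast? := by
  rw [List.getLast?_append, List.getLast?_eq_getLast (l := a :: l2) (by simp)]
  rfl

private lemma dist_le_walkWeight (w : V → V → ℝ≥0∞) {s v : V} {p : List V}
    (hp : IsWalk s v p) : dist w s v ≤ walkWeight w p :=
  iInf_le _ (⟨p, hp⟩ : {p : List V // IsWalk s v p})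

private lemma dist_triangle (w : V → V → ℝ≥0∞) (s u v : V) :
    dist w s v ≤ dist w s u + dist w u v := by
  unfold dist
  rw [ENNReal.iInf_add]
  refine le_iInf fun ⟨p, hp⟩ => ?_
  rw [ENNReal.add_iInf]
  refine le_iInf fun ⟨q, hq⟩ => ?_
  obtain ⟨p', rfl⟩ : ∃ p', p = p' ++ [u] := List.getLast?_eq_some_iff.mp hp.2.2
  obtain ⟨q', rfl⟩ : ∃ q', q = u :: q' := by
    cases q with
    | nil => exact absurd rfl hq.1
    | cons a t =>
        obtain rfl : a = u := by simpa using hq.2.1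
        exact ⟨t, rfl⟩
  have hw : IsWalk s v (p' ++ u :: q') := by
    refine ⟨by simp, ?_, ?_⟩
    · rw [head?_append_cons p' u q' []]
      exact hp.2.1
    · rw [getLast?_append_cons]
      exact hq.2.2
  calc (⨅ r : {r : List V // IsWalk s v r}, walkWeight w r.1)
      ≤ walkWeight w (p' ++ u :: q') := iInf_le (fun r : {r : List V // IsWalk s v r} => walkWeight w r.1) ⟨_, hw⟩
    _ = walkWeight w (p' ++ [u]) + walkWeight w (u :: q') := walkWeight_append w p' u q'

private lemma exists_dup_split : ∀ (p : List V), ¬ p.Nodup →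
    ∃ (p1 : List V) (a : V) (p2 p3 : List V), p = p1 ++ a :: (p2 ++ a :: p3)
  | [], h => absurd List.nodup_nil h
  | x :: t, h => by
      by_cases hx : x ∈ t
      · obtain ⟨p2, p3, rfl⟩ := List.append_of_mem hx
        exact ⟨[], x, p2, p3, by simp⟩
      · have ht : ¬ t.Nodup := fun hn => h (List.nodup_cons.mpr ⟨hx, hn⟩)
        obtain ⟨p1, a, p2, p3, rfl⟩ := exists_dup_split t ht
        exact ⟨x :: p1, a, p2, p3, rfl⟩

private lemma exists_nodup_walk_aux (w : V → V → ℝ≥0∞) (s v : V) :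
    ∀ (n : ℕ) (p : List V), p.length ≤ n → IsWalk s v p →
      ∃ q, IsWalk s v q ∧ q.Nodup ∧ walkWeight w q ≤ walkWeight w p := by
  intro n
  induction n with
  | zero =>
      intro p hl hp
      rw [Nat.le_zero, List.length_eq_zero_iff] at hl
      exact absurd hl hp.1
  | succ n IH =>
      intro p hl hp
      by_cases hnd : p.Nodup
      · exact ⟨p, hp, hnd, le_rfl⟩
      · obtain ⟨p1, a, p2, p3, rfl⟩ := exists_dup_split p hnd
        have hq : IsWalk s v (p1 ++ a :: p3) := by
          refine ⟨by simp, ?_, ?_⟩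
          · rw [head?_append_cons p1 a p3 (p2 ++ a :: p3)]
            exact hp.2.1
          · have h1 : (p1 ++ a :: (p2 ++ a :: p3)).getLast? = (a :: p3).getLast? := by
              rw [getLast?_append_cons,
                show a :: (p2 ++ a :: p3) = (a :: p2) ++ a :: p3 by simp,
                getLast?_append_cons]
            have h2 : (p1 ++ a :: p3).getLast? = (a :: p3).getLast? :=
              getLast?_append_cons p1 a p3
            rw [h2, ← h1]
            exact hp.2.2
        have hwle : walkWeight w (p1 ++ a :: p3) ≤ walkWeight w (p1 ++ a :: (p2 ++ a :: p3)) := by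
          have e1 : walkWeight w (p1 ++ a :: (p2 ++ a :: p3))
              = walkWeight w (p1 ++ [a]) + walkWeight w (a :: (p2 ++ a :: p3)) :=
            walkWeight_append w p1 a (p2 ++ a :: p3)
          have e2 : walkWeight w (a :: (p2 ++ a :: p3))
              = walkWeight w ((a :: p2) ++ [a]) + walkWeight w (a :: p3) := by
            have := walkWeight_append w (a :: p2) a p3
            simpa using this
          have e3 : walkWeight w (p1 ++ a :: p3)
              = walkWeight w (p1 ++ [a]) + walkWeight w (a :: p3) :=
            walkWeight_append w p1 a p3
          rw [e1, e2, e3]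
          exact add_le_add_right (le_add_left le_rfl) _
        have hlen : (p1 ++ a :: p3).length ≤ n := by
          have : (p1 ++ a :: (p2 ++ a :: p3)).length ≤ n + 1 := hl
          simp only [List.length_append, List.length_cons] at this ⊢
          omega
        obtain ⟨q, hq1, hq2, hq3⟩ := IH (p1 ++ a :: p3) hlen hq
        exact ⟨q, hq1, hq2, le_trans hq3 hwle⟩

private lemma exists_nodup_walk (w : V → V → ℝ≥0∞) {s v : V} {p : List V} (hp : IsWalk s v p) :
    ∃ q, IsWalk s v q ∧ q.Nodup ∧ walkWeight w q ≤ walkWeight w p :=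
  exists_nodup_walk_aux w s v p.length p le_rfl hp

private lemma exists_min_walk [Fintype V] (w : V → V → ℝ≥0∞) (s v : V)
    (h : dist w s v ≠ ⊤) : ∃ p, IsWalk s v p ∧ walkWeight w p = dist w s v := by
  classical
  set S : Set (List V) := {q | IsWalk s v q ∧ q.Nodup} with hS
  have hSfin : S.Finite :=
    Set.Finite.subset (List.finite_length_le V (Fintype.card V))
      (fun q hq => hq.2.length_le_card)
  have hlt : (⨅ p : {p : List V // IsWalk s v p}, walkWeight w p.1) < ⊤ := by
    rw [← dist]; exact h.lt_top
  obtain ⟨⟨p0, hp0⟩, -⟩ := iInf_lt_iff.mp hlt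
  obtain ⟨q0, hq0w, hq0n, -⟩ := exists_nodup_walk w hp0
  have hTne : (walkWeight w '' S).Nonempty := ⟨_, ⟨q0, ⟨hq0w, hq0n⟩, rfl⟩⟩
  obtain ⟨q, hqS, hqmin⟩ := hTne.csInf_mem (hSfin.image _)
  refine ⟨q, hqS.1, le_antisymm ?_ (dist_le_walkWeight w hqS.1)⟩
  rw [hqmin]
  refine le_iInf fun ⟨r, hr⟩ => ?_
  obtain ⟨r', hr'w, hr'n, hr'le⟩ := exists_nodup_walk w hr
  exact le_trans (sInf_le ⟨r', ⟨hr'w, hr'n⟩, rfl⟩) hr'le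

private lemma crossing {P : V → Prop} :
    ∀ (p : List V) (x : V), ¬ P x → P ((x :: p).getLast (by simp)) →
      ∃ p1 a c p2, x :: p = p1 ++ a :: c :: p2 ∧ ¬ P a ∧ P c
  | [], x, hx, hl => absurd (by simpa using hl) hx
  | y :: t, x, hx, hl => by
      by_cases hy : P y
      · exact ⟨[], x, y, t, rfl, hx, hy⟩
      · have hl' : P ((y :: t).getLast (by simp)) := by
          rwa [List.getLast_cons (by simp : (y :: t) ≠ [])] at hl
        obtain ⟨p1, a, c, p2, heq, ha, hc⟩ := crossing t y hy hl'
        exact ⟨x :: p1, a, c, p2, by rw [List.cons_append, ← heq], ha, hc⟩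

end SSSP


namespace SSSP

/-- Frontier property justifying the hypothesis of the BMSSP subproblem. -/
theorem frontier_property {V : Type*} [Fintype V] (w : V → V → ℝ≥0∞) (s : V)
    (dhat : V → ℝ≥0∞) (hest : ∀ v, dist w s v ≤ dhat v)
    (b B : ℝ≥0∞) (hb : 0 < b) (hbB : b ≤ B)
    (hcomplete : ∀ u, dist w s u < b → dhat u = dist w s u)
    (hrelaxed : ∀ u v, dist w s u < b → dhat v ≤ dist w s u + w u v) :
    ∀ v, dhat v ≠ dist w s v → dist w s v < B →
      ∃ u, dhat u = dist w s u ∧ b ≤ dhat u ∧ dhat u < B ∧ Visits w s u v := by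
  classical
  intro v hvne hvB
  have hvtop : dist w s v ≠ ⊤ := (lt_of_lt_of_le hvB le_top).ne
  have hvb : b ≤ dist w s v := by
    by_contra hcon
    exact hvne (hcomplete v (not_le.mp hcon))
  -- a minimal walk from s to v
  obtain ⟨p, hp, hpw⟩ := exists_min_walk w s v hvtop
  obtain ⟨t, rfl⟩ : ∃ t, p = s :: t := by
    cases p with
    | nil => exact absurd rfl hp.1
    | cons a t =>
        obtain rfl : a = s := by simpa using hp.2.1
        exact ⟨t, rfl⟩
  have hds : dist w s s = 0 :=
    le_antisymm (by simpa [walkWeight] using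
      dist_le_walkWeight w (⟨by simp, by simp, by simp⟩ : IsWalk s s [s])) (zero_le)
  have hlastv : (s :: t).getLast (by simp) = v := by
    have := hp.2.2
    rwa [List.getLast?_eq_getLast (l := s :: t) (by simp), Option.some_inj] at this
  have hPs : ¬ b ≤ dist w s s := by rw [hds]; exact not_le.mpr hb
  have hPv : b ≤ dist w s ((s :: t).getLast (by simp)) := by rw [hlastv]; exact hvb
  obtain ⟨p1, x, u, p2, heq, hxP, huP⟩ :=
    crossing (P := fun y => b ≤ dist w s y) t s hPs hPv
  have hdx : dist w s x < b := not_le.mp hxP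
  -- pieces of the minimal walk
  have hhead : (p1 ++ x :: u :: p2).head? = some s := by rw [← heq]; exact hp.2.1
  have hlast2' : (u :: p2).getLast? = some v := by
    have h := hp.2.2
    rw [heq, getLast?_append_cons, List.getLast?_cons_cons] at h
    exact h
  rw [heq] at hpw
  set W1 := walkWeight w (p1 ++ [x]) with hW1
  set W2 := walkWeight w (u :: p2) with hW2
  have hsplit : walkWeight w (p1 ++ x :: u :: p2) = W1 + (w x u + W2) := by
    rw [walkWeight_append w p1 x (u :: p2)]
    simp only [walkWeight]
    rfl
  have hwalk1 : IsWalk s x (p1 ++ [x]) :=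
    ⟨by simp, by rw [head?_append_cons p1 x [] (u :: p2)]; exact hhead,
      List.getLast?_concat⟩
  have hwalk2 : IsWalk u v (u :: p2) := ⟨by simp, rfl, hlast2'⟩
  have hwalk3 : IsWalk s u (p1 ++ [x, u]) := by
    refine ⟨by simp, ?_, ?_⟩
    · rw [show p1 ++ [x, u] = p1 ++ x :: [u] from rfl,
        head?_append_cons p1 x [u] (u :: p2)]
      exact hhead
    · rw [show p1 ++ [x, u] = (p1 ++ [x]) ++ [u] by simp]
      exact List.getLast?_concat
  have hW3 : walkWeight w (p1 ++ [x, u]) = W1 + w x u := by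
    rw [show p1 ++ [x, u] = p1 ++ x :: [u] from rfl, walkWeight_append w p1 x [u]]
    simp [walkWeight]
    rfl
  -- key inequalities
  have h1 : dist w s v ≤ dist w s u + dist w u v := dist_triangle w s u v
  have h2 : dist w s u ≤ W1 + w x u := hW3 ▸ dist_le_walkWeight w hwalk3
  have h3 : dist w u v ≤ W2 := dist_le_walkWeight w hwalk2
  have h4 : W1 + (w x u + W2) = dist w s v := hsplit ▸ hpw
  have hW2top : W2 ≠ ⊤ := by
    intro hW2t
    rw [hW2t] at h4
    simp at h4
    exact hvtop h4.symm
  have hduvtop : dist w u v ≠ ⊤ := fun ht => hW2top (top_le_iff.mp (ht ▸ h3))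
  -- d(u) = W1 + w x u
  have hchain : dist w s u + dist w u v ≤ dist w s v := by
    calc dist w s u + dist w u v ≤ (W1 + w x u) + W2 := add_le_add h2 h3
      _ = dist w s v := by rw [← h4, add_assoc]
  have hvisit : dist w s u + dist w u v = dist w s v := le_antisymm hchain h1
  have hdu : dist w s u = W1 + w x u := by
    by_contra hne
    have hlt : dist w s u < W1 + w x u := lt_of_le_of_ne h2 hne
    have : dist w s u + dist w u v < (W1 + w x u) + dist w u v :=
      ENNReal.add_lt_add_right hduvtop hlt
    have hcontra : dist w s v < dist w s v := by
      calc dist w s v = dist w s u + dist w u v := hvisit.symm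
        _ < (W1 + w x u) + dist w u v := this
        _ ≤ (W1 + w x u) + W2 := add_le_add_right h3 _
        _ = dist w s v := by rw [← h4, add_assoc]
    exact absurd hcontra (lt_irrefl _)
  -- completeness of u
  have hdxW1 : dist w s x ≤ W1 := dist_le_walkWeight w hwalk1
  have hcompl : dhat u = dist w s u := by
    refine le_antisymm ?_ (hest u)
    calc dhat u ≤ dist w s x + w x u := hrelaxed x u hdx
      _ ≤ W1 + w x u := add_le_add_left hdxW1 _
      _ = dist w s u := hdu.symm
  have hduB : dist w s u < B :=
    lt_of_le_of_lt (le_trans le_self_add (le_of_eq hvisit)) hvB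
  exact ⟨u, hcompl, hcompl ▸ huP, hcompl ▸ hduB, hvisit⟩


end SSSP
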